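/- Let T : S_n(ℝ) → S_n(ℝ) be a linear transformation such that T(A) is positive definite whenever A is positive definite, and such that rank T(E_ii) = 1 for every i = 1, …, n. Then there exist an invertible n×n real matrix W and a positive semi-definite real symmetric matrix H whose diagonal entries are all equal to 1, such that T(A) = W (H ∘ A) Wᵗ for every A ∈ S_n(ℝ). -/

import Mathlib

open Matrix

/-- The space `Sₙ(ℝ)` of `n × n` real symmetric matrices, as a submodule of the space of
all `n × n` real matrices. -/
def SymMat (n : ℕ) : Submodule ℝ (Matrix (Fin n) (Fin n) ℝ) where
  carrier := {A | A.IsSymm}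
  add_mem' := fun ha hb => ha.add hb
  zero_mem' := by simp [Matrix.IsSymm]
  smul_mem' := fun c _ hA => hA.smul c

/-- The matrix unit `E_ii`, as an element of `Sₙ(ℝ)`. -/
def symE (n : ℕ) (i : Fin n) : SymMat n :=
  ⟨Matrix.single i i 1,
    Matrix.IsSymm.ext fun a b => by simp [Matrix.single, and_comm]⟩

set_option maxHeartbeats 1000000

/-! ### Auxiliary lemmas -/


private lemma nonneg_of_forall_eps (a b : ℝ) (h : ∀ ε : ℝ, 0 < ε → 0 ≤ a + ε * b) : 0 ≤ a := by
  by_contra hc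
  push_neg at hc
  rcases le_or_gt b 0 with hb | hb
  · have := h 1 one_pos; nlinarith
  · have h2 := h (-a / (2 * b)) (div_pos (by linarith) (by linarith))
    have : a + (-a / (2 * b)) * b = a / 2 := by field_simp; ring
    rw [this] at h2; linarith

private lemma single_dot {n : ℕ} (M : Matrix (Fin n) (Fin n) ℝ) (a b : Fin n) :
    (Pi.single a 1 : Fin n → ℝ) ⬝ᵥ M *ᵥ (Pi.single b 1) = M a b := by
  simp [dotProduct, mulVec, Pi.single_apply, Finset.sum_ite_eq, ite_and]

private lemma sym_quad_zero {n : ℕ} (M : Matrix (Fin n) (Fin n) ℝ) (hM : Mᵀ = M) (i : Fin n)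
    (h : ∀ x : Fin n → ℝ, x i = 0 → x ⬝ᵥ M *ᵥ x = 0) :
    ∀ k l, k ≠ i → l ≠ i → M k l = 0 := by
  have diag : ∀ k, k ≠ i → M k k = 0 := by
    intro k hk
    have := h (Pi.single k 1) (by simp [Pi.single_eq_of_ne hk.symm])
    rwa [single_dot] at this
  intro k l hk hl
  have h2 := h (Pi.single k 1 + Pi.single l 1)
    (by simp [Pi.single_eq_of_ne hk.symm, Pi.single_eq_of_ne hl.symm])
  have hsym : M l k = M k l := by conv_lhs => rw [← hM, transpose_apply]
  rw [mulVec_add, dotProduct_add, add_dotProduct, add_dotProduct, single_dot, single_dot,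
    single_dot, single_dot, diag k hk, diag l hl, hsym] at h2
  linarith

private lemma vecMulVec_mulVec' {n : ℕ} (w v x : Fin n → ℝ) :
    vecMulVec w v *ᵥ x = (v ⬝ᵥ x) • w := by
  ext k
  simp [vecMulVec_apply, mulVec, dotProduct, Finset.sum_mul, Finset.mul_sum, mul_comm,
    mul_left_comm]

private lemma vecMulVec_posSemidef {n : ℕ} (v : Fin n → ℝ) : (vecMulVec v v).PosSemidef := by
  refine PosSemidef.of_dotProduct_mulVec_nonneg ?_ ?_
  · ext k l; simp [vecMulVec_apply, conjTranspose_apply, mul_comm]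
  · intro x
    rw [star_trivial, vecMulVec_mulVec', dotProduct_smul, smul_eq_mul, dotProduct_comm]
    exact mul_self_nonneg _

private lemma dotProduct_self_pos' {n : ℕ} {v : Fin n → ℝ} (hv : v ≠ 0) : 0 < v ⬝ᵥ v := by
  rcases (Finset.sum_nonneg fun k _ => mul_self_nonneg (v k)).lt_or_eq with h | h
  · exact h
  · exfalso; apply hv
    funext k
    have h2 := (Finset.sum_eq_zero_iff_of_nonneg (fun k _ => mul_self_nonneg (v k))).mp h.symm
    have h3 := h2 k (Finset.mem_univ k)
    show v k = 0
    nlinarith [h3]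

private lemma psd_rank_one {n : ℕ} (M : Matrix (Fin n) (Fin n) ℝ) (hM : M.PosSemidef)
    (hr : M.rank = 1) : ∃ w : Fin n → ℝ, M = vecMulVec w w := by
  have hsym : Mᵀ = M := hM.1
  have hr' := hr
  rw [Matrix.rank, finrank_eq_one_iff'] at hr
  obtain ⟨⟨v, hvmem⟩, hv0, hvall⟩ := hr
  have hv0' : v ≠ 0 := by simpa [Submodule.mk_eq_zero] using hv0
  have hcol : ∀ j, ∃ c : ℝ, ∀ k, c * v k = M k j := by
    intro j
    have hmem : (fun k => M k j) ∈ LinearMap.range M.mulVecLin :=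
      ⟨Pi.single j 1, by simp [mulVecLin_apply]; rfl⟩
    obtain ⟨c, hc⟩ := hvall ⟨_, hmem⟩
    exact ⟨c, fun k => congrFun (congrArg Subtype.val hc) k⟩
  choose c hc using hcol
  obtain ⟨j0, hj0⟩ := Function.ne_iff.mp hv0'
  have hvj0 : v j0 ≠ 0 := by simpa using hj0
  set t : ℝ := c j0 / v j0 with ht
  have hM_eq : M = t • vecMulVec v v := by
    ext k l
    have h1 : c l * v k = M k l := hc l k
    have h3 : c l * v j0 = M j0 l := hc l j0
    have h4 : c j0 * v l = M l j0 := hc j0 l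
    have hMs : M j0 l = M l j0 := by conv_lhs => rw [← hsym, transpose_apply]
    have hcl : c l = t * v l := by
      rw [ht, div_mul_eq_mul_div, eq_div_iff hvj0]
      rw [h3, hMs, ← h4]
    rw [Matrix.smul_apply, vecMulVec_apply, ← h1, hcl, smul_eq_mul]; ring
  have hvv : 0 < v ⬝ᵥ v := dotProduct_self_pos' hv0'
  have ht0 : t ≠ 0 := by
    intro h
    rw [h, zero_smul] at hM_eq
    rw [hM_eq, Matrix.rank_zero] at hr'
    exact one_ne_zero hr'.symm
  have htpos : 0 < t := by
    have hq := hM.dotProduct_mulVec_nonneg v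
    rw [star_trivial, hM_eq] at hq
    rw [Matrix.smul_mulVec, dotProduct_smul, vecMulVec_mulVec', dotProduct_smul] at hq
    simp only [smul_eq_mul] at hq
    rcases ht0.lt_or_gt with h | h
    · nlinarith [hq, hvv, mul_pos hvv hvv]
    · exact h
  refine ⟨fun k => Real.sqrt t * v k, ?_⟩
  rw [hM_eq]
  ext k l
  simp only [Matrix.smul_apply, vecMulVec_apply, smul_eq_mul]
  have h5 : Real.sqrt t * v k * (Real.sqrt t * v l)
      = (Real.sqrt t * Real.sqrt t) * (v k * v l) := by ring
  rw [h5, Real.mul_self_sqrt htpos.le]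

private lemma isHermitian_of_isSymm' {n : ℕ} {M : Matrix (Fin n) (Fin n) ℝ} (h : M.IsSymm) :
    M.IsHermitian := by
  have : Mᴴ = Mᵀ := by ext k l; simp [conjTranspose_apply]
  rw [Matrix.IsHermitian, this]; exact h

private lemma quad_stdBasis {n : ℕ} (i : Fin n) (x : Fin n → ℝ) :
    x ⬝ᵥ (Matrix.single i i (1:ℝ)) *ᵥ x = x i * x i := by
  rw [Matrix.single_mulVec]
  simp [dotProduct, Function.update_apply, Finset.sum_ite_eq', mul_comm]

/-! ### More auxiliary constructions -/


private def symOne (n : ℕ) : SymMat n := ⟨1, Matrix.isSymm_one⟩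

private def symF (n : ℕ) (i j : Fin n) : SymMat n :=
  ⟨Matrix.single i j 1 + Matrix.single j i 1,
    Matrix.IsSymm.ext fun a b => by
      simp [Matrix.single, and_comm, add_comm]⟩

private lemma symF_comm (n : ℕ) (i j : Fin n) : symF n i j = symF n j i := by
  apply Subtype.ext; show _ = _; simp [symF, add_comm]

private lemma symOne_eq_sum (n : ℕ) : symOne n = ∑ i, symE n i := by
  apply Subtype.ext
  show (1 : Matrix (Fin n) (Fin n) ℝ) = ((∑ i, symE n i : SymMat n) : Matrix (Fin n) (Fin n) ℝ)
  rw [AddSubmonoidClass.coe_finset_sum]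
  ext k l
  simp [symE, Matrix.sum_apply, Matrix.one_apply, Matrix.single, ite_and,
    Finset.sum_ite_eq, eq_comm]

private lemma symMat_decomp {n : ℕ} (A : SymMat n) :
    A = (2⁻¹ : ℝ) • ∑ p : Fin n × Fin n,
      (A : Matrix (Fin n) (Fin n) ℝ) p.1 p.2 • symF n p.1 p.2 := by
  apply Subtype.ext
  rw [SetLike.val_smul, AddSubmonoidClass.coe_finset_sum]
  ext k l
  simp only [Matrix.smul_apply, Matrix.sum_apply, SetLike.val_smul, symF, Matrix.single, Matrix.add_apply, of_apply,
    smul_eq_mul, mul_ite, mul_zero, mul_one, mul_add]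
  rw [Fintype.sum_prod_type]
  simp only [ite_and, Finset.sum_add_distrib, Finset.sum_ite_irrel, Finset.sum_const_zero,
    Finset.sum_ite_eq, Finset.sum_ite_eq', Finset.mem_univ, if_true]
  have hs : (A : Matrix (Fin n) (Fin n) ℝ) l k = (A : Matrix (Fin n) (Fin n) ℝ) k l := by
    conv_lhs => rw [← A.2, transpose_apply]
  linarith [hs]

/-- The congruence-normalized transformation. -/
private def Smap (n : ℕ) (T : SymMat n →ₗ[ℝ] SymMat n) (V : Matrix (Fin n) (Fin n) ℝ) :
    SymMat n →ₗ[ℝ] Matrix (Fin n) (Fin n) ℝ where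
  toFun := fun A => V * ((T A : SymMat n) : Matrix (Fin n) (Fin n) ℝ) * Vᵀ
  map_add' := by
    intro A B
    show V * ((T (A + B) : SymMat n) : Matrix (Fin n) (Fin n) ℝ) * Vᵀ
      = V * (T A : Matrix (Fin n) (Fin n) ℝ) * Vᵀ + V * (T B : Matrix (Fin n) (Fin n) ℝ) * Vᵀ
    rw [map_add, Submodule.coe_add, mul_add, add_mul]
  map_smul' := by
    intro c A
    show V * ((T (c • A) : SymMat n) : Matrix (Fin n) (Fin n) ℝ) * Vᵀ
      = c • (V * (T A : Matrix (Fin n) (Fin n) ℝ) * Vᵀ)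
    rw [LinearMap.map_smul, SetLike.val_smul, mul_smul_comm, smul_mul_assoc]

private lemma Smap_apply (n : ℕ) (T : SymMat n →ₗ[ℝ] SymMat n) (V : Matrix (Fin n) (Fin n) ℝ)
    (A : SymMat n) : Smap n T V A = V * (T A : Matrix (Fin n) (Fin n) ℝ) * Vᵀ := rfl

/-- Let `T : Sₙ(ℝ) → Sₙ(ℝ)` be linear, preserving positive definiteness,
with `rank T(E_ii) = 1` for all `i`.  Then there exist an invertible matrix `W` and a
positive semi-definite matrix `H` with unit diagonal such that `T(A) = W (H ∘ A) Wᵗ` for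
all `A ∈ Sₙ(ℝ)`. -/
theorem stmt6 (n : ℕ) (T : SymMat n →ₗ[ℝ] SymMat n)
    (hT : ∀ A : SymMat n, (A : Matrix (Fin n) (Fin n) ℝ).PosDef →
      ((T A : Matrix (Fin n) (Fin n) ℝ)).PosDef)
    (hE : ∀ i : Fin n, ((T (symE n i) : Matrix (Fin n) (Fin n) ℝ)).rank = 1) :
    ∃ (W H : Matrix (Fin n) (Fin n) ℝ), IsUnit W ∧ H.PosSemidef ∧ (∀ i, H i i = 1) ∧
      ∀ A : SymMat n,
        (T A : Matrix (Fin n) (Fin n) ℝ) = W * (H.hadamard (A : Matrix (Fin n) (Fin n) ℝ)) * Wᵀ := by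
  classical
  have hconj : ∀ M : Matrix (Fin n) (Fin n) ℝ, Mᴴ = Mᵀ := by
    intro M; ext k l; simp [conjTranspose_apply]
  -- T preserves positive semidefiniteness
  have hPSD : ∀ A : SymMat n, (A : Matrix (Fin n) (Fin n) ℝ).PosSemidef →
      ((T A : Matrix (Fin n) (Fin n) ℝ)).PosSemidef := by
    intro A hA
    refine PosSemidef.of_dotProduct_mulVec_nonneg (isHermitian_of_isSymm' (T A).2) ?_
    intro x
    rw [star_trivial]
    by_cases hx : x = 0
    · simp [hx]
    apply nonneg_of_forall_eps _ (x ⬝ᵥ ((T (symOne n) : Matrix (Fin n) (Fin n) ℝ) *ᵥ x))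
    intro ε hε
    have hεI : ((ε • symOne n : SymMat n) : Matrix (Fin n) (Fin n) ℝ).PosDef := by
      show (ε • (1 : Matrix (Fin n) (Fin n) ℝ)).PosDef
      refine PosDef.of_dotProduct_mulVec_pos (isHermitian_of_isSymm' (Matrix.isSymm_one.smul ε)) fun y hy => ?_
      rw [star_trivial, Matrix.smul_mulVec, one_mulVec, dotProduct_smul, smul_eq_mul]
      exact mul_pos hε (dotProduct_self_pos' hy)
    have hpd : ((A + ε • symOne n : SymMat n) : Matrix (Fin n) (Fin n) ℝ).PosDef := by
      rw [Submodule.coe_add]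
      exact Matrix.PosDef.posSemidef_add hA hεI
    have h2 := (hT _ hpd).dotProduct_mulVec_pos hx
    rw [star_trivial, map_add, LinearMap.map_smul, Submodule.coe_add, SetLike.val_smul,
      add_mulVec, Matrix.smul_mulVec, dotProduct_add, dotProduct_smul, smul_eq_mul] at h2
    exact h2.le
  -- T (E_ii) is psd of rank one
  have hEpsd : ∀ i : Fin n, ((symE n i : SymMat n) : Matrix (Fin n) (Fin n) ℝ).PosSemidef := by
    intro i
    have : ((symE n i : SymMat n) : Matrix (Fin n) (Fin n) ℝ)
        = vecMulVec (Pi.single i 1) (Pi.single i 1) := by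
      ext k l
      by_cases hk : i = k <;> by_cases hl : i = l <;>
        simp [symE, Matrix.single, vecMulVec_apply, Pi.single_apply, hk, hl, eq_comm,
          Ne.symm]
    rw [this]; exact vecMulVec_posSemidef _
  choose w hw using fun i => psd_rank_one _ (hPSD _ (hEpsd i)) (hE i)
  set W : Matrix (Fin n) (Fin n) ℝ := Matrix.of fun k a => w a k with hWdef
  have hWE : ∀ i, W * Matrix.single i i 1 * Wᵀ = vecMulVec (w i) (w i) := by
    intro i
    ext k l
    simp [hWdef, Matrix.mul_apply, Matrix.single, vecMulVec_apply, ite_and, Finset.sum_ite_eq]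
  have hWWt : W * Wᵀ = (T (symOne n) : Matrix (Fin n) (Fin n) ℝ) := by
    have h1 : W * Wᵀ = ∑ i, vecMulVec (w i) (w i) := by
      ext k l
      simp [hWdef, Matrix.mul_apply, vecMulVec_apply, Matrix.sum_apply]
    rw [h1, symOne_eq_sum, map_sum, AddSubmonoidClass.coe_finset_sum]
    exact Finset.sum_congr rfl fun i _ => (hw i).symm
  have hT1pd : ((T (symOne n) : Matrix (Fin n) (Fin n) ℝ)).PosDef := by
    apply hT
    show (1 : Matrix (Fin n) (Fin n) ℝ).PosDef
    exact Matrix.PosDef.one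
  have hWWpd : (W * Wᵀ).PosDef := by rw [hWWt]; exact hT1pd
  have hdet : W.det ≠ 0 := by
    have h := hWWpd.det_pos
    rw [det_mul, det_transpose] at h
    intro h0; rw [h0] at h; simp at h
  have hWunit : IsUnit W := (Matrix.isUnit_iff_isUnit_det W).2 (isUnit_iff_ne_zero.2 hdet)
  set V := W⁻¹ with hVdef
  have hVW : V * W = 1 := Matrix.nonsing_inv_mul W (isUnit_iff_ne_zero.2 hdet)
  have hWV : W * V = 1 := Matrix.mul_nonsing_inv W (isUnit_iff_ne_zero.2 hdet)
  -- the normalized map S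
  set S : SymMat n →ₗ[ℝ] Matrix (Fin n) (Fin n) ℝ := Smap n T V with hSdef
  have hSapp : ∀ A : SymMat n, S A = V * (T A : Matrix (Fin n) (Fin n) ℝ) * Vᵀ :=
    fun A => Smap_apply n T V A
  have hSsym : ∀ A : SymMat n, (S A)ᵀ = S A := by
    intro A
    rw [hSapp, transpose_mul, transpose_mul, transpose_transpose, (T A).2,
      Matrix.mul_assoc]
  have hSE : ∀ i, S (symE n i) = Matrix.single i i 1 := by
    intro i
    rw [hSapp]
    show V * ((T (symE n i) : Matrix (Fin n) (Fin n) ℝ)) * Vᵀ = _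
    rw [hw i, ← hWE i]
    rw [← Matrix.mul_assoc, ← Matrix.mul_assoc, hVW, Matrix.one_mul, Matrix.mul_assoc,
      ← transpose_mul, hVW, transpose_one, Matrix.mul_one]
  have hSpsd : ∀ A : SymMat n, (A : Matrix (Fin n) (Fin n) ℝ).PosSemidef → (S A).PosSemidef := by
    intro A hA
    have h := (hPSD A hA).mul_mul_conjTranspose_same V
    rw [hconj V] at h
    rw [hSapp]
    exact h
  -- the psd family
  have hfam : ∀ (i j : Fin n), i ≠ j → ∀ s t : ℝ,
      (s^2 • Matrix.single i i (1:ℝ) + t^2 • Matrix.single j j 1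
        + (s*t) • S (symF n i j)).PosSemidef := by
    intro i j hij s t
    set u : Fin n → ℝ := fun k => (if i = k then s else 0) + (if j = k then t else 0) with hu
    have h1 : ((s^2 • symE n i + t^2 • symE n j + (s*t) • symF n i j : SymMat n) :
        Matrix (Fin n) (Fin n) ℝ) = vecMulVec u u := by
      rw [Submodule.coe_add, Submodule.coe_add, SetLike.val_smul, SetLike.val_smul,
        SetLike.val_smul]
      ext k l
      simp only [symE, symF, Matrix.add_apply, Matrix.smul_apply, smul_eq_mul, Matrix.single, of_apply,
        vecMulVec_apply, hu]
      by_cases hki : i = k <;> by_cases hkj : j = k <;> by_cases hli : i = l <;>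
        by_cases hlj : j = l <;>
        simp_all [hij] <;> ring
    have h2 := hSpsd _ (by rw [h1]; exact vecMulVec_posSemidef _)
    rw [map_add, map_add, _root_.map_smul, _root_.map_smul, _root_.map_smul, hSE i, hSE j] at h2
    exact h2
  -- vanishing of the quadratic form
  have hq0 : ∀ (i j : Fin n), i ≠ j → ∀ x : Fin n → ℝ, x i = 0 →
      x ⬝ᵥ (S (symF n i j)) *ᵥ x = 0 := by
    intro i j hij x hx
    set q := x ⬝ᵥ (S (symF n i j)) *ᵥ x with hq
    have key : ∀ s : ℝ, 0 ≤ x j * x j + s * q := by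
      intro s
      have h := (hfam i j hij s 1).dotProduct_mulVec_nonneg x
      rw [star_trivial, add_mulVec, add_mulVec, Matrix.smul_mulVec,
        Matrix.smul_mulVec, Matrix.smul_mulVec, dotProduct_add, dotProduct_add,
        dotProduct_smul, dotProduct_smul, dotProduct_smul, quad_stdBasis, quad_stdBasis,
        hx] at h
      simpa using h
    by_contra hq0
    have h := key (-(x j * x j + 1)/q)
    rw [div_mul_cancel₀ _ hq0] at h
    linarith
  have hBsupp : ∀ (i j : Fin n), i ≠ j → ∀ k l, ¬(k = i ∧ l = j) → ¬(k = j ∧ l = i) →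
      S (symF n i j) k l = 0 := by
    intro i j hij k l h1 h2
    have hz1 := sym_quad_zero _ (hSsym (symF n i j)) i (hq0 i j hij)
    have hz2 := sym_quad_zero _ (hSsym (symF n i j)) j
      (by rw [symF_comm]; exact hq0 j i (Ne.symm hij))
    by_cases hki : k = i <;> by_cases hkj : k = j <;> by_cases hli : l = i <;>
      by_cases hlj : l = j
    all_goals first
      | (exact hz1 k l hki hli)
      | (exact hz2 k l hkj hlj)
      | simp_all
    -- remaining cases must be contradictions
  -- the matrix H
  set H : Matrix (Fin n) (Fin n) ℝ :=
    Matrix.of (fun i j => if i = j then 1 else S (symF n i j) i j) with hHdef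
  have hHdiag : ∀ i, H i i = 1 := fun i => by simp [hHdef]
  have hSsym' : ∀ (A : SymMat n) k l, S A k l = S A l k := by
    intro A k l
    conv_lhs => rw [← hSsym A]
    rfl
  have hkey : ∀ i j, S (symF n i j) = H i j • (Matrix.single i j 1 + Matrix.single j i 1) := by
    intro i j
    by_cases hij : i = j
    · subst hij
      have h1 : symF n i i = symE n i + symE n i := by
        apply Subtype.ext
        rw [Submodule.coe_add]
        rfl
      rw [h1, map_add, hSE i, hHdiag i, one_smul]
    · ext k l
      rw [Matrix.smul_apply, Matrix.add_apply, smul_eq_mul]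
      by_cases h1 : k = i ∧ l = j
      · obtain ⟨rfl, rfl⟩ := h1
        have e1 : Matrix.single k l (1:ℝ) k l = 1 := by
          rw [show Matrix.single k l (1:ℝ) k l = if k = k ∧ l = l then 1 else 0 from rfl,
            if_pos ⟨rfl, rfl⟩]
        have e2 : Matrix.single l k (1:ℝ) k l = 0 := by
          rw [show Matrix.single l k (1:ℝ) k l = if l = k ∧ k = l then 1 else 0 from rfl,
            if_neg (fun h => hij h.2)]
        rw [e1, e2, add_zero, mul_one, hHdef]
        simp [hij]
      · by_cases h2 : k = j ∧ l = i
        · obtain ⟨rfl, rfl⟩ := h2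
          have e1 : Matrix.single l k (1:ℝ) k l = 0 := by
            rw [show Matrix.single l k (1:ℝ) k l = if l = k ∧ k = l then 1 else 0 from rfl,
              if_neg (fun h => hij h.1)]
          have e2 : Matrix.single k l (1:ℝ) k l = 1 := by
            rw [show Matrix.single k l (1:ℝ) k l = if k = k ∧ l = l then 1 else 0 from rfl,
              if_pos ⟨rfl, rfl⟩]
          rw [show Matrix.single l k (1:ℝ) k l + Matrix.single k l (1:ℝ) k l = 1 by
            rw [e1, e2, zero_add], mul_one, hSsym' (symF n l k) k l, symF_comm, hHdef]
          simp only [of_apply, if_neg hij]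
          rw [symF_comm n k l]
        · rw [hBsupp i j hij k l h1 h2]
          have e1 : Matrix.single i j (1:ℝ) k l = 0 := by
            rw [show Matrix.single i j (1:ℝ) k l = if i = k ∧ j = l then 1 else 0 from rfl,
              if_neg (fun h => h1 ⟨h.1.symm, h.2.symm⟩)]
          have e2 : Matrix.single j i (1:ℝ) k l = 0 := by
            rw [show Matrix.single j i (1:ℝ) k l = if j = k ∧ i = l then 1 else 0 from rfl,
              if_neg (fun h => h2 ⟨h.1.symm, h.2.symm⟩)]
          rw [e1, e2, add_zero, mul_zero]
  have hHsym : ∀ k l, H k l = H l k := by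
    intro k l
    by_cases hkl : k = l
    · rw [hkl]
    · rw [hHdef]
      simp only [of_apply, if_neg hkl, if_neg (Ne.symm hkl)]
      rw [hSsym' (symF n k l) k l, symF_comm]
  -- the main formula for S
  have hmain : ∀ A : SymMat n, S A = H.hadamard (A : Matrix (Fin n) (Fin n) ℝ) := by
    intro A
    conv_lhs => rw [symMat_decomp A, _root_.map_smul, map_sum]
    rw [Finset.sum_congr rfl fun p _ => by
      rw [_root_.map_smul, hkey p.1 p.2]]
    ext k l
    rw [hadamard_apply]
    simp only [Matrix.smul_apply, Matrix.sum_apply, smul_eq_mul, Matrix.smul_apply, Matrix.add_apply, Matrix.single,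
      of_apply, ite_and, mul_ite, mul_zero, mul_one, mul_add]
    rw [Fintype.sum_prod_type]
    simp only [ite_and, Finset.sum_add_distrib, Finset.sum_ite_irrel, Finset.sum_const_zero,
      Finset.sum_ite_eq, Finset.sum_ite_eq', Finset.mem_univ, if_true]
    have hs : (A : Matrix (Fin n) (Fin n) ℝ) l k = (A : Matrix (Fin n) (Fin n) ℝ) k l := by
      conv_lhs => rw [← A.2, transpose_apply]
    rw [hs, hHsym l k]
    ring
  -- H is positive semidefinite
  have hHpsd : H.PosSemidef := by
    set J : SymMat n := ⟨Matrix.of fun _ _ => (1:ℝ), Matrix.IsSymm.ext fun a b => rfl⟩ with hJdef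
    have hJpsd : ((J : SymMat n) : Matrix (Fin n) (Fin n) ℝ).PosSemidef := by
      have h1 : ((J : SymMat n) : Matrix (Fin n) (Fin n) ℝ)
          = vecMulVec (fun _ => 1) (fun _ => 1) := by
        ext k l
        simp [hJdef, vecMulVec_apply]
      rw [h1]
      exact vecMulVec_posSemidef _
    have h2 := hSpsd J hJpsd
    rw [hmain J] at h2
    have h3 : H.hadamard ((J : SymMat n) : Matrix (Fin n) (Fin n) ℝ) = H := by
      ext k l
      rw [hadamard_apply]
      show H k l * (1:ℝ) = H k l
      rw [mul_one]
    rwa [h3] at h2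
  -- conclusion
  refine ⟨W, H, hWunit, hHpsd, hHdiag, ?_⟩
  intro A
  have h := hmain A
  rw [hSapp A] at h
  have h2 : W * (V * (T A : Matrix (Fin n) (Fin n) ℝ) * Vᵀ) * Wᵀ
      = (T A : Matrix (Fin n) (Fin n) ℝ) := by
    have h3 : W * (V * (T A : Matrix (Fin n) (Fin n) ℝ) * Vᵀ) * Wᵀ
        = (W * V) * (T A : Matrix (Fin n) (Fin n) ℝ) * (Vᵀ * Wᵀ) := by
      simp only [Matrix.mul_assoc]
    rw [h3, ← transpose_mul, hWV, transpose_one, Matrix.one_mul, Matrix.mul_one]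
  rw [← h2, h]
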